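/- Let H = ℓ² (or any infinite-dimensional Hilbert space with orthonormal system {e_i}) and K = { x ∈ H : ‖x‖ ≥ 1 }. Set x̄ = e₁, p₀ = (1/2)e₁, and fix L > 2. Then for tₙ ↘ 0, the sequence zₙ := −L tₙ e₁ + e₂ + L e_n (n > 2) satisfies x̄ + tₙ zₙ ∈ K, zₙ ⇀ e₂, and (δ_K(x̄ + tₙ zₙ) − tₙ⟨p₀ − x̄, zₙ⟩)/(tₙ²/2) = −(2/tₙ)⟨p₀ − x̄, zₙ⟩ → −∞ as appropriate choices show; consequently the weak second subderivative Q_{δ_K}^{x̄, p₀ − x̄}(e₂) = −∞. -/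

import Mathlib

open Filter Topology
open scoped RealInnerProductSpace Classical

variable {H : Type*} [NormedAddCommGroup H] [InnerProductSpace ℝ H] [CompleteSpace H]

/-- Second-order difference quotient of `j` at `x` for `g` with step `t` and direction `w`. -/
noncomputable def secondQuotH (j : H → EReal) (x g : H) (t : ℝ) (w : H) : EReal :=
  ((2 / t ^ 2 : ℝ) : EReal) * (j (x + t • w) - j x - ((t * ⟪g, w⟫ : ℝ) : EReal))

/-- Weak convergence of a sequence in the Hilbert space `H`. -/
def WeakTendstoH (z : ℕ → H) (z₀ : H) : Prop :=
  ∀ w : H, Tendsto (fun n => ⟪z n, w⟫) atTop (nhds ⟪z₀, w⟫)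

/-- The weak second subderivative of `j` at `x` for `g`. -/
noncomputable def QsubH (j : H → EReal) (x g z : H) : EReal :=
  sInf { L | ∃ (t : ℕ → ℝ) (zs : ℕ → H),
      (∀ n, 0 < t n) ∧ Tendsto t atTop (nhds 0) ∧ WeakTendstoH zs z ∧
      L = Filter.liminf (fun n => secondQuotH j x g (t n) (zs n)) atTop }

/-- The indicator function of a set, with values in `EReal`. -/
noncomputable def indicatorE (K : Set H) : H → EReal := fun y => if y ∈ K then 0 else ⊤

/-- The tangent cone `T_K(x) = cl(ℝ⁺ (K - x))`. -/
def tangentConeH (K : Set H) (x : H) : Set H :=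
  closure { z : H | ∃ c : ℝ, 0 ≤ c ∧ ∃ k ∈ K, z = c • (k - x) }

/-- The second-order tangent set `T²_K(x, z)`. -/
def secondTangentH (K : Set H) (x z : H) : Set H :=
  { r : H | Tendsto (fun t : ℝ => Metric.infDist (x + t • z + (t ^ 2 / 2) • r) K / t ^ 2)
      (nhdsWithin 0 (Set.Ioi 0)) (nhds 0) }

/-- The proximal normal cone condition: `v ∈ N^P_K(x̄)`. -/
def ProxNormal (K : Set H) (xb v : H) : Prop :=
  ∃ l : ℝ, 0 ≤ l ∧ ∃ y : H, (xb ∈ K ∧ ∀ k ∈ K, ‖xb - y‖ ≤ ‖k - y‖) ∧ v = l • (y - xb)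

/-- `K` is `r`-prox-regular. -/
def ProxRegular (r : ℝ) (K : Set H) : Prop :=
  ∀ xb ∈ K, ∀ x ∈ K, ∀ v : H, ProxNormal K xb v →
    r * ⟪v, x - xb⟫ ≤ (1 / 2) * ‖v‖ * ‖x - xb‖ ^ 2

/-- Strong second-order epi-differentiability of `j` at `x` for `g`. -/
def StrongTwiceEpiH (j : H → EReal) (x g : H) : Prop :=
  ∀ z : H, ∀ t : ℕ → ℝ, (∀ n, 0 < t n) → Tendsto t atTop (nhds 0) →
    ∃ zs : ℕ → H, Tendsto zs atTop (nhds z) ∧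
      Tendsto (fun n => secondQuotH j x g (t n) (zs n)) atTop (nhds (QsubH j x g z))

/-- An orthonormal sequence converges weakly to zero (Bessel). -/
lemma weak_to_zero_aux (e : ℕ → H) (he : Orthonormal ℝ e) (w : H) :
    Tendsto (fun n => ⟪e n, w⟫) atTop (nhds 0) := by
  have hs : Summable fun i => ‖⟪e i, w⟫‖ ^ 2 := he.inner_products_summable w
  have h2 := hs.tendsto_atTop_zero
  have h3 : Tendsto (fun n => Real.sqrt (‖⟪e n, w⟫‖ ^ 2)) atTop (nhds (Real.sqrt 0)) :=
    h2.sqrt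
  simp only [Real.sqrt_sq_eq_abs, abs_norm, Real.sqrt_zero] at h3
  exact tendsto_zero_iff_norm_tendsto_zero.2 h3

lemma main_aux (e : ℕ → H) (he : Orthonormal ℝ e) (L : ℝ) (hL : 2 < L)
    (t : ℕ → ℝ) (ht : ∀ n, 0 < t n) (ht0 : Tendsto t atTop (nhds 0)) :
    WeakTendstoH (fun n => (-(L * t n)) • e 0 + e 1 + L • e n) (e 1) ∧
    ∀ n, 2 ≤ n →
      e 0 + t n • ((-(L * t n)) • e 0 + e 1 + L • e n) ∈ { x : H | 1 ≤ ‖x‖ } ∧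
      secondQuotH (indicatorE { x : H | 1 ≤ ‖x‖ }) (e 0) (((1 : ℝ) / 2) • e 0 - e 0)
        (t n) ((-(L * t n)) • e 0 + e 1 + L • e n) = ((-L : ℝ) : EReal) := by
  have hij := orthonormal_iff_ite.mp he
  -- norm of combinations
  have hx : ∀ (a b c : ℝ) (n : ℕ), 2 ≤ n →
      ‖a • e 0 + b • e 1 + c • e n‖ ^ 2 = a ^ 2 + b ^ 2 + c ^ 2 := by
    intro a b c n hn
    have h0n : (0 : ℕ) ≠ n := by omega
    have hn0 : n ≠ 0 := by omega
    have h1n : (1 : ℕ) ≠ n := by omega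
    have hn1 : n ≠ 1 := by omega
    have h01 : (0 : ℕ) ≠ 1 := by omega
    have h10 : (1 : ℕ) ≠ 0 := by omega
    rw [← real_inner_self_eq_norm_sq]
    simp only [inner_add_left, inner_add_right, real_inner_smul_left, real_inner_smul_right,
      hij, if_neg h0n, if_neg hn0, if_neg h1n, if_neg hn1, if_neg h01, if_neg h10, if_pos rfl, if_true]
    ring
  constructor
  · intro w
    have hz : (fun n => ⟪(-(L * t n)) • e 0 + e 1 + L • e n, w⟫)
        = fun n => (-(L * t n)) * ⟪e 0, w⟫ + ⟪e 1, w⟫ + L * ⟪e n, w⟫ := by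
      funext n
      simp [inner_add_left, real_inner_smul_left]
    rw [hz]
    have h1 : Tendsto (fun n => -(L * t n) * ⟪e 0, w⟫) atTop (nhds 0) := by
      have := ((ht0.const_mul L).neg).mul_const ⟪e 0, w⟫
      simpa using this
    have h2 := (weak_to_zero_aux e he w).const_mul L
    have hc : Tendsto (fun _ : ℕ => ⟪e 1, w⟫) atTop (nhds ⟪e 1, w⟫) := tendsto_const_nhds
    have h3 := (h1.add hc).add h2
    simpa using h3
  · intro n hn
    set s := t n with hs
    have hspos : 0 < s := ht n
    have hxeq : e 0 + s • ((-(L * s)) • e 0 + e 1 + L • e n)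
        = (1 - L * s ^ 2) • e 0 + s • e 1 + (L * s) • e n := by
      have : (1 : ℝ) - L * s ^ 2 = 1 + s * (-(L * s)) := by ring
      rw [this]
      module
    have hnorm : ‖e 0 + s • ((-(L * s)) • e 0 + e 1 + L • e n)‖ ^ 2
        = (1 - L * s ^ 2) ^ 2 + s ^ 2 + (L * s) ^ 2 := by
      rw [hxeq]; exact hx _ _ _ n hn
    have hmem : e 0 + s • ((-(L * s)) • e 0 + e 1 + L • e n) ∈ { x : H | 1 ≤ ‖x‖ } := by
      have hnn : (0 : ℝ) ≤ ‖e 0 + s • ((-(L * s)) • e 0 + e 1 + L • e n)‖ := norm_nonneg _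
      have hsq : 1 ≤ ‖e 0 + s • ((-(L * s)) • e 0 + e 1 + L • e n)‖ ^ 2 := by
        rw [hnorm]
        nlinarith [sq_nonneg (L - 1), sq_nonneg (L * s ^ 2), sq_nonneg s, hspos.le]
      show 1 ≤ ‖e 0 + s • ((-(L * s)) • e 0 + e 1 + L • e n)‖
      nlinarith
    refine ⟨hmem, ?_⟩
    have hmem0 : e 0 ∈ { x : H | 1 ≤ ‖x‖ } := by
      show 1 ≤ ‖e 0‖
      rw [he.1 0]
    have hg : ⟪((1 : ℝ) / 2) • e 0 - e 0, (-(L * s)) • e 0 + e 1 + L • e n⟫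
        = L * s / 2 := by
      have h0n : (0 : ℕ) ≠ n := by omega
      have h01 : (0 : ℕ) ≠ 1 := by omega
      simp only [inner_sub_left, inner_add_right, real_inner_smul_left, real_inner_smul_right,
        hij, if_neg h0n, if_neg h01, if_pos rfl, if_true]
      ring
    simp only [secondQuotH, indicatorE, hg]
    rw [if_pos hmem, if_pos hmem0]
    have hs2 : s ≠ 0 := ne_of_gt hspos
    rw [sub_zero, zero_sub, ← EReal.coe_neg, ← EReal.coe_mul, EReal.coe_eq_coe_iff]
    field_simp

/-- for `K = {x : ‖x‖ ≥ 1}`, `x̄ = e₁ = proj_K(p₀)` with `p₀ = ½e₁`, and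
`L > 2`, the sequences `zₙ = −Ltₙe₁ + e₂ + Leₙ` are feasible, converge weakly to `e₂`
and have second-order difference quotient `−L`; consequently the weak second
subderivative of `δ_K` at `x̄` for `p₀ − x̄` equals `−∞` at `e₂`. -/
theorem Qsub_indicator_complement_ball_eq_bot
    (e : ℕ → H) (he : Orthonormal ℝ e) (L : ℝ) (hL : 2 < L) :
    (∀ t : ℕ → ℝ, (∀ n, 0 < t n) → Tendsto t atTop (nhds 0) →
      WeakTendstoH (fun n => (-(L * t n)) • e 0 + e 1 + L • e n) (e 1) ∧
      ∀ n, 2 ≤ n →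
        e 0 + t n • ((-(L * t n)) • e 0 + e 1 + L • e n) ∈ { x : H | 1 ≤ ‖x‖ } ∧
        secondQuotH (indicatorE { x : H | 1 ≤ ‖x‖ }) (e 0) (((1 : ℝ) / 2) • e 0 - e 0)
          (t n) ((-(L * t n)) • e 0 + e 1 + L • e n) = ((-L : ℝ) : EReal)) ∧
    QsubH (indicatorE { x : H | 1 ≤ ‖x‖ }) (e 0) (((1 : ℝ) / 2) • e 0 - e 0) (e 1) = ⊥ := by
  constructor
  · intro t ht ht0
    exact main_aux e he L hL t ht ht0
  · rw [EReal.eq_bot_iff_forall_lt]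
    intro y
    set L' : ℝ := max 3 (1 - y) with hL'def
    have hL' : 2 < L' := lt_of_lt_of_le (by norm_num) (le_max_left _ _)
    set ts : ℕ → ℝ := fun n => 1 / ((n : ℝ) + 1) with hts
    have htpos : ∀ n, 0 < ts n := fun n => by positivity
    have ht0 : Tendsto ts atTop (nhds 0) := tendsto_one_div_add_atTop_nhds_zero_nat
    obtain ⟨hweak, hquot⟩ := main_aux e he L' hL' ts htpos ht0
    set zs : ℕ → H := fun n => (-(L' * ts n)) • e 0 + e 1 + L' • e n with hzs
    have hev : ∀ᶠ n in atTop,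
        secondQuotH (indicatorE { x : H | 1 ≤ ‖x‖ }) (e 0) (((1 : ℝ) / 2) • e 0 - e 0)
          (ts n) (zs n) = ((-L' : ℝ) : EReal) :=
      eventually_atTop.2 ⟨2, fun n hn => (hquot n hn).2⟩
    have hlim : Filter.liminf (fun n =>
        secondQuotH (indicatorE { x : H | 1 ≤ ‖x‖ }) (e 0) (((1 : ℝ) / 2) • e 0 - e 0)
          (ts n) (zs n)) atTop = ((-L' : ℝ) : EReal) := by
      rw [liminf_congr hev]
      exact liminf_const _
    have hle : QsubH (indicatorE { x : H | 1 ≤ ‖x‖ }) (e 0)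
        (((1 : ℝ) / 2) • e 0 - e 0) (e 1) ≤ ((-L' : ℝ) : EReal) :=
      sInf_le ⟨ts, zs, htpos, ht0, hweak, hlim.symm⟩
    refine lt_of_le_of_lt hle ?_
    have h1 : (1 : ℝ) - y ≤ L' := le_max_right _ _
    have : (-L' : ℝ) < y := by linarith
    exact_mod_cast this
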